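/- (Theorem 3.7) Let X be a strong partitive set of an undirected graph G = (V,E) and let M = M(S) be a multiplex of G generated by a simplex S. If M ∩ E(X) ≠ ∅, then M ⊆ E(X). -/

import Mathlib

open Set

namespace TransOrient

variable {V : Type*}

/-- `E` is the edge set of an undirected graph on the vertex type `V`:
an irreflexive and symmetric relation, given as a set of ordered pairs. -/
def IsGraph (E : Set (V × V)) : Prop :=
  (∀ a : V, (a, a) ∉ E) ∧ (∀ a b : V, (a, b) ∈ E ↔ (b, a) ∈ E)

/-- The forcing relation `Γ` on directed edges:
`(a,b) Γ (a',b')` iff (`a = a'` and `(b,b') ∉ E`) or (`b = b'` and `(a,a') ∉ E`). -/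
def Gamma (E : Set (V × V)) (e e' : V × V) : Prop :=
  e ∈ E ∧ e' ∈ E ∧
    ((e.1 = e'.1 ∧ (e.2, e'.2) ∉ E) ∨ (e.2 = e'.2 ∧ (e.1, e'.1) ∉ E))

/-- The implication classes of `G = (V,E)`: equivalence classes on `E` of
the reflexive-transitive closure of `Γ`. -/
def IsImplicationClass (E : Set (V × V)) (A : Set (V × V)) : Prop :=
  ∃ e ∈ E, A = {e' | Relation.ReflTransGen (Gamma E) e e'}

/-- `A⁻¹ = {(b,a) : (a,b) ∈ A}`. -/
def inv (A : Set (V × V)) : Set (V × V) := {p | (p.2, p.1) ∈ A}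

/-- The color class `Â = A ∪ A⁻¹` of an implication class `A`. -/
def hat (A : Set (V × V)) : Set (V × V) := A ∪ inv A

/-- `Ã`: the set of vertices incident to an edge of `A`. -/
def tilde (A : Set (V × V)) : Set V := {v | ∃ w, (v, w) ∈ A ∨ (w, v) ∈ A}

/-- A transitive orientation `E'` of a symmetric edge set `F`:
`E' ⊆ F`, `E' ∩ E'⁻¹ = ∅`, `E' ∪ E'⁻¹ = F` and `E'` is transitive. -/
def IsTransOrientation (F E' : Set (V × V)) : Prop :=
  E' ⊆ F ∧ E' ∩ inv E' = ∅ ∧ E' ∪ inv E' = F ∧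
    ∀ a b c : V, (a, b) ∈ E' → (b, c) ∈ E' → (a, c) ∈ E'

/-- `G` is a comparability graph if `E` admits a transitive orientation. -/
def IsComparability (E : Set (V × V)) : Prop :=
  ∃ E' : Set (V × V), IsTransOrientation E E'

/-- `E(X)`: the set of edges of `E` with both endpoints in `X`. -/
def edgesOn (E : Set (V × V)) (X : Set V) : Set (V × V) :=
  {p ∈ E | p.1 ∈ X ∧ p.2 ∈ X}

/-- `X` is a partitive set of `G = (V,E)`. -/
def IsPartitive (E : Set (V × V)) (X : Set V) : Prop :=
  ∀ a ∈ X, ∀ b ∈ X, ∀ c ∉ X, ((a, c) ∈ E ↔ (b, c) ∈ E)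

/-- `X` is a "strong" partitive set of `G = (V,E)`. -/
def IsStrongPartitive (E : Set (V × V)) (X : Set V) : Prop :=
  IsPartitive E X ∧
    ∀ Y : Set V, IsPartitive E Y → (Y ∩ X).Nonempty → X ⊆ Y ∨ Y ⊆ X

/-- `X` is a maximal "strong" partitive set of `G = (V,E)`: a strong partitive
set different from `V` which is maximal, for inclusion, among the strong
partitive sets different from `V`. -/
def IsMaxStrongPartitive (E : Set (V × V)) (X : Set V) : Prop :=
  IsStrongPartitive E X ∧ X ≠ Set.univ ∧
    ∀ Y : Set V, IsStrongPartitive E Y → Y ≠ Set.univ → X ⊆ Y → X = Y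

/-- `X` is a partitive set of the induced subgraph `G(W) = (W, E(W))`. -/
def IsPartitiveIn (E : Set (V × V)) (W : Set V) (X : Set V) : Prop :=
  X ⊆ W ∧ ∀ a ∈ X, ∀ b ∈ X, ∀ c ∈ W \ X,
    ((a, c) ∈ edgesOn E W ↔ (b, c) ∈ edgesOn E W)

/-- `X` is a "strong" partitive set of the induced subgraph `G(W)`. -/
def IsStrongPartitiveIn (E : Set (V × V)) (W : Set V) (X : Set V) : Prop :=
  IsPartitiveIn E W X ∧
    ∀ Y : Set V, IsPartitiveIn E W Y → (Y ∩ X).Nonempty → X ⊆ Y ∨ Y ⊆ X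

/-- `X` is a maximal "strong" partitive set of the induced subgraph `G(W)`. -/
def IsMaxStrongPartitiveIn (E : Set (V × V)) (W : Set V) (X : Set V) : Prop :=
  IsStrongPartitiveIn E W X ∧ X ≠ W ∧
    ∀ Y : Set V, IsStrongPartitiveIn E W Y → Y ≠ W → X ⊆ Y → X = Y

/-- Two directed edges lie in the same color class of `G = (V,E)`. -/
def SameColor (E : Set (V × V)) (e e' : V × V) : Prop :=
  ∃ A : Set (V × V), IsImplicationClass E A ∧ e ∈ hat A ∧ e' ∈ hat A

/-- A simplex of `G = (V,E)` given by its (finite, nonempty) vertex set `VS`: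
a complete induced subgraph whose edges, for distinct unordered pairs,
lie in distinct color classes of `G`. -/
def IsSimplex (E : Set (V × V)) (VS : Set V) : Prop :=
  VS.Finite ∧ VS.Nonempty ∧
    (∀ a ∈ VS, ∀ b ∈ VS, a ≠ b → (a, b) ∈ E) ∧
    (∀ a ∈ VS, ∀ b ∈ VS, ∀ c ∈ VS, ∀ d ∈ VS, a ≠ b → c ≠ d →
      SameColor E (a, b) (c, d) → (a = c ∧ b = d) ∨ (a = d ∧ b = c))

/-- The rank of a simplex on `r+1` vertices is `r`. -/
noncomputable def simplexRank (VS : Set V) : ℕ := VS.ncard - 1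

/-- A maximal simplex: its vertex set is not properly contained in the
vertex set of another simplex. -/
def IsMaxSimplex (E : Set (V × V)) (VS : Set V) : Prop :=
  IsSimplex E VS ∧ ∀ VS' : Set V, IsSimplex E VS' → VS ⊆ VS' → VS = VS'

/-- The multiplex `M(S)` generated by a simplex with vertex set `VS`:
the union of all color classes of `G` containing an edge of the simplex. -/
def multiplex (E : Set (V × V)) (VS : Set V) : Set (V × V) :=
  {e | ∃ A : Set (V × V), IsImplicationClass E A ∧ e ∈ hat A ∧
    ∃ a ∈ VS, ∃ b ∈ VS, a ≠ b ∧ (a, b) ∈ hat A}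

/-- A maximal multiplex of `G`: a multiplex generated by a maximal simplex. -/
def IsMaxMultiplex (E : Set (V × V)) (M : Set (V × V)) : Prop :=
  ∃ VS : Set V, IsMaxSimplex E VS ∧ M = multiplex E VS

/-- `P` is a partition of the set `W`. -/
def IsPartitionOf (W : Set V) (P : Set (Set V)) : Prop :=
  (∀ X ∈ P, X.Nonempty) ∧ ⋃₀ P = W ∧
    ∀ X ∈ P, ∀ Y ∈ P, X ≠ Y → X ∩ Y = ∅

/-- Adjacency in the quotient of the induced subgraph `G(W)` by a partition:
two distinct blocks are adjacent iff some pair of representatives is an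
edge of `E(W)`. -/
def quotAdj (E : Set (V × V)) (W : Set V) (X Y : Set V) : Prop :=
  X ≠ Y ∧ ∃ x ∈ X, ∃ y ∈ Y, (x, y) ∈ edgesOn E W

/-- A partitive set of an abstract graph with vertex set `W` and adjacency
relation `Adj`. -/
def IsPartitiveGen {α : Type*} (W : Set α) (Adj : α → α → Prop) (X : Set α) : Prop :=
  X ⊆ W ∧ ∀ a ∈ X, ∀ b ∈ X, ∀ c ∈ W \ X, (Adj a c ↔ Adj b c)

/-- An abstract graph `(W, Adj)` is indecomposable if all its partitive
sets are trivial. -/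
def IndecomposableGen {α : Type*} (W : Set α) (Adj : α → α → Prop) : Prop :=
  ∀ X : Set α, IsPartitiveGen W Adj X → X.Subsingleton ∨ X = W

/-- An isomorphism between the graphs `(Vα, Aα)` and `(Vβ, Aβ)`:
a bijection of the vertex sets preserving adjacency in both directions. -/
def GraphIso {α β : Type*} (Vα : Set α) (Aα : α → α → Prop)
    (Vβ : Set β) (Aβ : β → β → Prop) : Prop :=
  ∃ f : α → β, Set.BijOn f Vα Vβ ∧
    ∀ a ∈ Vα, ∀ b ∈ Vα, (Aα a b ↔ Aβ (f a) (f b))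

/-- `(V', E')` is a subgraph of the induced subgraph `G(W)` of `G = (V,E)`. -/
def IsSubgraphOf (E : Set (V × V)) (W : Set V) (V' : Set V) (E' : Set (V × V)) : Prop :=
  V' ⊆ W ∧ E' ⊆ edgesOn E W ∧ (∀ e ∈ E', e.1 ∈ V' ∧ e.2 ∈ V') ∧
    (∀ a b : V, (a, b) ∈ E' ↔ (b, a) ∈ E')

end TransOrient

section Aux
open TransOrient
variable {V : Type*}

private lemma gammaSymm {E : Set (V × V)} (hG : IsGraph E) : Symmetric (Gamma E) := by
  rintro e e' ⟨he, he', h⟩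
  refine ⟨he', he, ?_⟩
  rcases h with ⟨h1, h2⟩ | ⟨h1, h2⟩
  · exact Or.inl ⟨h1.symm, fun hm => h2 ((hG.2 _ _).mp hm)⟩
  · exact Or.inr ⟨h1.symm, fun hm => h2 ((hG.2 _ _).mp hm)⟩

private lemma step_mem {E : Set (V × V)} (hG : IsGraph E) {X : Set V}
    (hX : IsPartitive E X) {e e' : V × V} (hGam : Gamma E e e')
    (he : e ∈ edgesOn E X) : e' ∈ edgesOn E X := by
  obtain ⟨heE, he'E, hor⟩ := hGam
  obtain ⟨_, h1, h2⟩ := he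
  rcases hor with ⟨hfst, hne⟩ | ⟨hsnd, hne⟩
  · refine ⟨he'E, hfst ▸ h1, ?_⟩
    by_contra hq
    exact hne ((hX e.2 h2 e.1 h1 e'.2 hq).mpr (by rw [hfst]; exact he'E))
  · refine ⟨he'E, ?_, hsnd ▸ h2⟩
    by_contra hp
    have h3 : (e.2, e'.1) ∈ E := by rw [hsnd]; exact (hG.2 _ _).mp he'E
    exact hne ((hX e.1 h1 e.2 h2 e'.1 hp).mpr h3)

private lemma rtg_mem {E : Set (V × V)} (hG : IsGraph E) {X : Set V}
    (hX : IsPartitive E X) {e e' : V × V}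
    (h : Relation.ReflTransGen (Gamma E) e e') (he : e ∈ edgesOn E X) :
    e' ∈ edgesOn E X := by
  induction h with
  | refl => exact he
  | tail _ hstep ih => exact step_mem hG hX hstep ih

private lemma class_subset {E : Set (V × V)} (hG : IsGraph E) {X : Set V}
    (hX : IsPartitive E X) {A : Set (V × V)} (hA : IsImplicationClass E A)
    {e : V × V} (heA : e ∈ A) (heX : e ∈ edgesOn E X) :
    A ⊆ edgesOn E X := by
  obtain ⟨g, hgE, rfl⟩ := hA
  intro e' he'
  have h1 : Relation.ReflTransGen (Gamma E) e g :=
    (@Relation.ReflTransGen.symmetric _ (Gamma E) ⟨fun _ _ h => gammaSymm hG h⟩).symm _ _ heA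
  exact rtg_mem hG hX (h1.trans he') heX

/-- step relation for the "outside" closure -/
private def Kst (E : Set (V × V)) (X : Set V) (a : V) : V → V → Prop :=
  fun u w => (w ∉ X ∧ (a, w) ∈ E) ∧ (u, w) ∉ E

/-- step relation for the co-component closure inside X -/
private def Cst (E : Set (V × V)) (X : Set V) : V → V → Prop :=
  fun u w => w ∈ X ∧ (u, w) ∉ E

private lemma key {E : Set (V × V)} (hG : IsGraph E) {X : Set V}
    (hX : IsStrongPartitive E X) {a b c : V}
    (ha : a ∈ X) (hb : b ∈ X) (hc : c ∉ X) (hacE : (a, c) ∈ E) :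
    Relation.ReflTransGen (Gamma E) (c, a) (c, b) := by
  have hall : ∀ v, v ∉ X → (a, v) ∈ E → ∀ x ∈ X, (x, v) ∈ E := by
    intro v hv hav x hx
    exact (hX.1 a ha x hx v hv).mp hav
  have hKmem : ∀ v, Relation.ReflTransGen (Kst E X a) c v → v ∉ X ∧ (a, v) ∈ E := by
    intro v hv
    induction hv with
    | refl => exact ⟨hc, hacE⟩
    | tail _ hstep _ => exact hstep.1
  have hCmem : ∀ x, Relation.ReflTransGen (Cst E X) a x → x ∈ X := by
    intro x hx
    induction hx with
    | refl => exact ha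
    | tail _ hstep _ => exact hstep.1
  by_cases hcase1 : Relation.ReflTransGen (Cst E X) a b
  · have main : ∀ x, Relation.ReflTransGen (Cst E X) a x →
        Relation.ReflTransGen (Gamma E) (c, a) (c, x) := by
      intro x hx
      induction hx with
      | refl => exact .refl
      | tail hprev hstep ih =>
        rename_i u w
        exact ih.tail ⟨(hG.2 _ _).mp (hall c hc hacE u (hCmem u hprev)),
          (hG.2 _ _).mp (hall c hc hacE w hstep.1), Or.inl ⟨rfl, hstep.2⟩⟩
    exact main b hcase1
  by_cases hcase2 : ∃ v, Relation.ReflTransGen (Kst E X a) c v ∧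
      ∃ d, d ∉ X ∧ (a, d) ∉ E ∧ (v, d) ∈ E
  · obtain ⟨v, hvK, d, hdX, had, hvd⟩ := hcase2
    obtain ⟨hvX, hav⟩ := hKmem v hvK
    have hforward : ∀ u, Relation.ReflTransGen (Kst E X a) c u →
        Relation.ReflTransGen (Gamma E) (c, a) (u, a) := by
      intro u hu
      induction hu with
      | refl => exact .refl
      | tail hprev hstep ih =>
        rename_i p q
        exact ih.tail ⟨(hG.2 _ _).mp (hKmem p hprev).2, (hG.2 _ _).mp hstep.1.2,
          Or.inr ⟨rfl, hstep.2⟩⟩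
    have hbackward : ∀ u, Relation.ReflTransGen (Kst E X a) c u →
        Relation.ReflTransGen (Gamma E) (u, b) (c, b) := by
      intro u hu
      induction hu with
      | refl => exact .refl
      | tail hprev hstep ih =>
        rename_i p q
        refine Relation.ReflTransGen.head ?_ ih
        exact ⟨(hG.2 _ _).mp (hall q hstep.1.1 hstep.1.2 b hb),
          (hG.2 _ _).mp (hall p (hKmem p hprev).1 (hKmem p hprev).2 b hb),
          Or.inr ⟨rfl, fun hqp => hstep.2 ((hG.2 _ _).mp hqp)⟩⟩
    have hdb : (d, b) ∉ E := fun hdb =>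
      had ((hX.1 b hb a ha d hdX).mp ((hG.2 _ _).mp hdb))
    have step1 : Gamma E (v, a) (v, d) := ⟨(hG.2 _ _).mp hav, hvd, Or.inl ⟨rfl, had⟩⟩
    have step2 : Gamma E (v, d) (v, b) :=
      ⟨hvd, (hG.2 _ _).mp (hall v hvX hav b hb), Or.inl ⟨rfl, hdb⟩⟩
    exact (((hforward v hvK).tail step1).tail step2).trans (hbackward v hvK)
  · exfalso
    set Y : Set V := {x | Relation.ReflTransGen (Cst E X) a x} ∪
      {v | Relation.ReflTransGen (Kst E X a) c v} with hYdef
    have haY : a ∈ Y := Or.inl Relation.ReflTransGen.refl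
    have hcY : c ∈ Y := Or.inr Relation.ReflTransGen.refl
    have hYpart : IsPartitive E Y := by
      intro y₁ hy₁ y₂ hy₂ d hd
      suffices h : ∀ y ∈ Y, ((y, d) ∈ E ↔ (d ∈ X ∨ (a, d) ∈ E)) by
        rw [h y₁ hy₁, h y₂ hy₂]
      intro y hy
      by_cases hdX : d ∈ X
      · simp only [hdX, true_or, iff_true]
        rcases hy with hyC | hyK
        · by_contra hyd
          exact hd (Or.inl (Relation.ReflTransGen.tail hyC ⟨hdX, hyd⟩))
        · exact (hG.2 _ _).mp (hall y (hKmem y hyK).1 (hKmem y hyK).2 d hdX)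
      · by_cases had : (a, d) ∈ E
        · simp only [hdX, had, or_true, iff_true, false_or]
          rcases hy with hyC | hyK
          · exact (hX.1 a ha y (hCmem y hyC) d hdX).mp had
          · by_contra hyd
            exact hd (Or.inr (Relation.ReflTransGen.tail hyK ⟨⟨hdX, had⟩, hyd⟩))
        · simp only [hdX, had, or_false, false_or, iff_false]
          rcases hy with hyC | hyK
          · intro hyd
            exact had ((hX.1 a ha y (hCmem y hyC) d hdX).mpr hyd)
          · intro hyd
            exact hcase2 ⟨y, hyK, d, hdX, had, hyd⟩
    rcases hX.2 Y hYpart ⟨a, haY, ha⟩ with hXY | hYX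
    · rcases hXY hb with hbC | hbK
      · exact hcase1 hbC
      · exact (hKmem b hbK).1 hb
    · exact hc (hYX hcY)

end Aux

open TransOrient in
/-- **(Theorem 3.7)** If `X` is a strong partitive set and `M = M(S)` a
multiplex of `G`, then `M ∩ E(X) ≠ ∅` implies `M ⊆ E(X)`. -/
theorem multiplex_subset_of_meets_strong_partitive
    {V : Type*} (E : Set (V × V)) (hG : IsGraph E)
    (X : Set V) (hX : IsStrongPartitive E X)
    (VS : Set V) (hS : IsSimplex E VS)
    (hne : (multiplex E VS ∩ edgesOn E X).Nonempty) :
    multiplex E VS ⊆ edgesOn E X := by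
  obtain ⟨e₀, he₀M, he₀X⟩ := hne
  obtain ⟨A₀, hA₀, he₀hat, a₀, ha₀, b₀, hb₀, hab₀, hABhat⟩ := he₀M
  have hsymX : ∀ p : V × V, p ∈ edgesOn E X → (p.2, p.1) ∈ edgesOn E X := by
    rintro ⟨p, q⟩ ⟨hpq, hp, hq⟩
    exact ⟨(hG.2 _ _).mp hpq, hq, hp⟩
  have hA₀sub : A₀ ⊆ edgesOn E X := by
    rcases he₀hat with h | h
    · exact class_subset hG hX.1 hA₀ h he₀X
    · exact class_subset hG hX.1 hA₀ h (hsymX _ he₀X)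
  have hab₀X : a₀ ∈ X ∧ b₀ ∈ X := by
    rcases hABhat with h | h
    · have hh := hA₀sub h; exact ⟨hh.2.1, hh.2.2⟩
    · have hh := hA₀sub h; exact ⟨hh.2.2, hh.2.1⟩
  obtain ⟨hfin, hnonempty, hcomplete, hcolors⟩ := hS
  have hVSX : VS ⊆ X := by
    intro c hcVS
    by_contra hcX
    have hca : c ≠ a₀ := fun h => hcX (h ▸ hab₀X.1)
    have hcb : c ≠ b₀ := fun h => hcX (h ▸ hab₀X.2)
    have hacE : (a₀, c) ∈ E := hcomplete a₀ ha₀ c hcVS (Ne.symm hca)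
    have hpath := key hG hX hab₀X.1 hab₀X.2 hcX hacE
    have hSC : SameColor E (a₀, c) (b₀, c) :=
      ⟨{e' | Relation.ReflTransGen (Gamma E) (c, a₀) e'},
       ⟨(c, a₀), (hG.2 _ _).mp hacE, rfl⟩,
       Or.inr (show Relation.ReflTransGen (Gamma E) (c, a₀) (c, a₀) from .refl),
       Or.inr hpath⟩
    rcases hcolors a₀ ha₀ c hcVS b₀ hb₀ c hcVS (Ne.symm hca) (Ne.symm hcb) hSC with
      ⟨h1, _⟩ | ⟨h1, _⟩
    · exact hab₀ h1
    · exact hca h1.symm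
  rintro e ⟨A, hA, hehat, a, haVS, b, hbVS, hab, habhat⟩
  have haX := hVSX haVS
  have hbX := hVSX hbVS
  have habE : (a, b) ∈ E := hcomplete a haVS b hbVS hab
  have hAsub : A ⊆ edgesOn E X := by
    rcases habhat with h | h
    · exact class_subset hG hX.1 hA h ⟨habE, haX, hbX⟩
    · exact class_subset hG hX.1 hA h ⟨(hG.2 _ _).mp habE, hbX, haX⟩
  rcases hehat with h | h
  · exact hAsub h
  · exact hsymX _ (hAsub h)
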